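/- Assume v ≤ v₀ and |m − θ₀| ≤ δ₀, where v₀ > 0, θ₀ ∈ ℝ and δ₀ ≥ 0 are known prior to observing the sample. Let ε₁, …, ε_k ∈ (0,1) and x₂, …, x_k > 0. Let U₂, …, U_k be uniform random variables in (−1, 1), independent of each other and of the sample. Define recursively: δ₁ = √(2(v₀ + δ₀²) log(ε₁⁻¹)/n), α₁ = √(2 log(ε₁⁻¹)/(n(v₀ + δ₀²))), θ̃₁ = θ̂_{α₁}(θ₀); and for i = 2, …, k: γᵢ = log(1 + xᵢ⁻¹), δᵢ = √(2[v₀ + (1 + xᵢ)² δᵢ₋₁²][log(εᵢ⁻¹) + γᵢ]/n), αᵢ = √(2[log(εᵢ⁻¹) + γᵢ]/(n[v₀ + (1 + xᵢ)² δᵢ₋₁²])), θ̃ᵢ = θ̂_{αᵢ}(θ̃ᵢ₋₁ + xᵢ δᵢ₋₁ Uᵢ). Then with probability at least 1 − 2 Σ_{i=1}^k εᵢ, |m − θ̃_k| ≤ δ_k. -/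

import Mathlib

open MeasureTheory ProbabilityTheory

/-- The threshold function `T(x) = (1/2) log ((1 + x + x²/2)/(1 - x + x²/2))`. -/
noncomputable def threshT (x : ℝ) : ℝ :=
  (1 / 2) * Real.log ((1 + x + x ^ 2 / 2) / (1 - x + x ^ 2 / 2))

/-- The truncated mean estimator
`θ̂_α(θ₀) = θ₀ + (1/(n α)) ∑ᵢ T (α (Yᵢ - θ₀))` computed on a sample `Y : Fin n → ℝ`. -/
noncomputable def thetaHat (n : ℕ) (α θ₀ : ℝ) (Y : Fin n → ℝ) : ℝ :=
  θ₀ + (1 / (n * α)) * ∑ i, threshT (α * (Y i - θ₀))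

/-- The deterministic sequence of accuracies `δᵢ` of the iterated scheme:
`δ₁ = √(2 (v₀ + δ₀²) log (ε₁⁻¹)/n)` and, for `i ≥ 2`,
`δᵢ = √(2 [v₀ + (1 + xᵢ)² δᵢ₋₁²] [log (εᵢ⁻¹) + log (1 + xᵢ⁻¹)]/n)`. -/
noncomputable def deltaSeq (n : ℕ) (v₀ δ₀ : ℝ) (ε x : ℕ → ℝ) : ℕ → ℝ
  | 0 => δ₀
  | 1 => Real.sqrt (2 * (v₀ + δ₀ ^ 2) * Real.log (ε 1)⁻¹ / n)
  | (i + 2) =>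
      Real.sqrt (2 * (v₀ + (1 + x (i + 2)) ^ 2 * (deltaSeq n v₀ δ₀ ε x (i + 1)) ^ 2) *
        (Real.log (ε (i + 2))⁻¹ + Real.log (1 + (x (i + 2))⁻¹)) / n)

/-- The deterministic sequence of truncation parameters `αᵢ` of the iterated scheme:
`α₁ = √(2 log (ε₁⁻¹)/(n (v₀ + δ₀²)))` and, for `i ≥ 2`,
`αᵢ = √(2 [log (εᵢ⁻¹) + log (1 + xᵢ⁻¹)]/(n [v₀ + (1 + xᵢ)² δᵢ₋₁²]))`. -/
noncomputable def alphaSeq (n : ℕ) (v₀ δ₀ : ℝ) (ε x : ℕ → ℝ) : ℕ → ℝ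
  | 0 => 0
  | 1 => Real.sqrt (2 * Real.log (ε 1)⁻¹ / (n * (v₀ + δ₀ ^ 2)))
  | (i + 2) =>
      Real.sqrt (2 * (Real.log (ε (i + 2))⁻¹ + Real.log (1 + (x (i + 2))⁻¹)) /
        (n * (v₀ + (1 + x (i + 2)) ^ 2 * (deltaSeq n v₀ δ₀ ε x (i + 1)) ^ 2)))

/-- The sequence of iterated truncated mean estimators:
`θ̃₁ = θ̂_{α₁}(θ₀)` and, for `i ≥ 2`, `θ̃ᵢ = θ̂_{αᵢ}(θ̃ᵢ₋₁ + xᵢ δᵢ₋₁ Uᵢ)`. -/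
noncomputable def thetaSeq (n : ℕ) (v₀ δ₀ θ₀ : ℝ) (ε x : ℕ → ℝ)
    (Y : Fin n → ℝ) (U : ℕ → ℝ) : ℕ → ℝ
  | 0 => θ₀
  | 1 => thetaHat n (alphaSeq n v₀ δ₀ ε x 1) θ₀ Y
  | (i + 2) =>
      thetaHat n (alphaSeq n v₀ δ₀ ε x (i + 2))
        (thetaSeq n v₀ δ₀ θ₀ ε x Y U (i + 1) +
          x (i + 2) * deltaSeq n v₀ δ₀ ε x (i + 1) * U (i + 2)) Y

lemma denomA_pos (x : ℝ) : 0 < 1 + x + x ^ 2 / 2 := by nlinarith [sq_nonneg (x + 1)]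
lemma denomB_pos (x : ℝ) : 0 < 1 - x + x ^ 2 / 2 := by nlinarith [sq_nonneg (x - 1)]

lemma threshT_neg (x : ℝ) : threshT (-x) = - threshT x := by
  unfold threshT
  rw [show (1 : ℝ) + -x + (-x) ^ 2 / 2 = 1 - x + x ^ 2 / 2 by ring,
    show (1 : ℝ) - -x + (-x) ^ 2 / 2 = 1 + x + x ^ 2 / 2 by ring,
    show (1 - x + x ^ 2 / 2) / (1 + x + x ^ 2 / 2) =
      ((1 + x + x ^ 2 / 2) / (1 - x + x ^ 2 / 2))⁻¹ from (inv_div _ _).symm,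
    Real.log_inv]
  ring

lemma exp_threshT_le (x : ℝ) : Real.exp (threshT x) ≤ 1 + x + x ^ 2 / 2 := by
  have hA := denomA_pos x
  have hB := denomB_pos x
  have hprod : 1 ≤ (1 + x + x ^ 2 / 2) * (1 - x + x ^ 2 / 2) := by nlinarith [pow_le_pow_left₀ (le_of_lt (by positivity : (0:ℝ) < 1)) (le_refl (1:ℝ)) 2, sq_nonneg (x^2)]
  have h1 : threshT x ≤ Real.log (1 + x + x ^ 2 / 2) := by
    unfold threshT
    rw [Real.log_div (ne_of_gt hA) (ne_of_gt hB)]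
    have hBlog : -Real.log (1 + x + x ^ 2 / 2) ≤ Real.log (1 - x + x ^ 2 / 2) := by
      rw [← Real.log_inv]
      apply Real.log_le_log (by positivity)
      rw [inv_le_iff_one_le_mul₀ hA]
      linarith [hprod]
    linarith
  calc Real.exp (threshT x) ≤ Real.exp (Real.log (1 + x + x ^ 2 / 2)) := Real.exp_le_exp.2 h1
    _ = _ := Real.exp_log hA

lemma continuous_threshT : Continuous threshT := by
  unfold threshT
  apply Continuous.mul continuous_const
  have h1 : Continuous fun x : ℝ => (1 + x + x ^ 2 / 2) / (1 - x + x ^ 2 / 2) := by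
    apply Continuous.div
    · exact (continuous_const.add continuous_id).add ((continuous_pow 2).div_const 2)
    · exact (continuous_const.sub continuous_id).add ((continuous_pow 2).div_const 2)
    · intro x; exact ne_of_gt (denomB_pos x)
  exact h1.log (fun x => ne_of_gt (div_pos (denomA_pos x) (denomB_pos x)))

lemma continuous_thetaHat (n : ℕ) (α : ℝ) :
    Continuous (fun p : ℝ × (Fin n → ℝ) => thetaHat n α p.1 p.2) := by
  unfold thetaHat
  apply Continuous.add continuous_fst
  apply Continuous.mul continuous_const
  apply continuous_finset_sum
  intro i _
  exact continuous_threshT.comp (continuous_const.mul ((continuous_apply i).comp continuous_snd |>.sub continuous_fst))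

lemma thetaHat_neg (n : ℕ) (α θ₀ : ℝ) (Y : Fin n → ℝ) :
    thetaHat n α (-θ₀) (fun i => - Y i) = - thetaHat n α θ₀ Y := by
  unfold thetaHat
  rw [neg_add]
  congr 1
  rw [← mul_neg, ← Finset.sum_neg_distrib]
  congr 1
  apply Finset.sum_congr rfl
  intro i _
  rw [← threshT_neg]
  congr 1
  ring
section Calib
variable {L Q : ℝ} {n : ℕ}

lemma calib_alpha_pos (hL : 0 < L) (hQ : 0 < Q) (hn : 0 < n) :
    0 < Real.sqrt (2 * L / (n * Q)) := Real.sqrt_pos.2 (by positivity)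

lemma calib_identity (hL : 0 < L) (hQ : 0 < Q) (hn : 0 < n) :
    Real.sqrt (2 * L / (n * Q)) * Q / 2 + L / (n * Real.sqrt (2 * L / (n * Q)))
      = Real.sqrt (2 * Q * L / n) := by
  have hn' : (0:ℝ) < n := by exact_mod_cast hn
  set a := Real.sqrt (2 * L / (n * Q)) with ha
  have hapos : 0 < a := calib_alpha_pos hL hQ hn
  have ha2 : a ^ 2 = 2 * L / (n * Q) := Real.sq_sqrt (by positivity)
  have hprod : a * Real.sqrt (2 * Q * L / n) = 2 * L / n := by
    rw [ha, ← Real.sqrt_mul (by positivity)]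
    rw [show 2 * L / (↑n * Q) * (2 * Q * L / ↑n) = (2 * L / n) ^ 2 by field_simp]
    exact Real.sqrt_sq (by positivity)
  have hδ : Real.sqrt (2 * Q * L / n) = (2 * L / n) / a := by
    field_simp [ne_of_gt hapos] at hprod ⊢
    linarith [hprod]
  have key : a ^ 2 * (n * Q) = 2 * L := by
    rw [ha2]; field_simp
  rw [hδ]
  field_simp
  linear_combination key
end Calib
open scoped ENNReal

lemma lintegral_indep_prod {ι Ω : Type*} [MeasurableSpace Ω] {P : Measure Ω}
    [IsProbabilityMeasure P] {W : ι → Ω → ℝ≥0∞}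
    (hW : iIndepFun W P) (hWm : ∀ i, Measurable (W i))
    (S : Finset ι) : ∫⁻ ω, ∏ j ∈ S, W j ω ∂P = ∏ j ∈ S, ∫⁻ ω, W j ω ∂P := by
  classical
  induction S using Finset.induction_on with
  | empty => simp
  | insert i s hnotmem ih =>
      rw [Finset.prod_insert hnotmem, ← ih]
      have hindep : IndepFun (W i) (fun a => ∏ j ∈ s, W j a) P := by
        have h := (hW.indepFun_finset_prod_of_notMem hWm hnotmem).symm
        simpa [Finset.prod_fn] using h
      have := lintegral_mul_eq_lintegral_mul_lintegral_of_indepFun''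
        (hWm i).aemeasurable (s.measurable_prod (fun j _ => hWm j)).aemeasurable hindep
      rw [← this]
      simp [Finset.prod_insert hnotmem]
lemma measurable_g_aux (α θ' : ℝ) :
    Measurable (fun y : ℝ => ENNReal.ofReal (Real.exp (threshT (α * (y - θ'))))) :=
  ENNReal.measurable_ofReal.comp (Real.continuous_exp.comp
    (continuous_threshT.comp (continuous_const.mul
      (continuous_id.sub continuous_const)))).measurable

lemma chernoff_upper {Ω : Type*} [MeasurableSpace Ω] (P : Measure Ω) [IsProbabilityMeasure P]
    (n : ℕ) (hn : 0 < n) (Y : Fin n → Ω → ℝ) (hYmeas : ∀ i, Measurable (Y i))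
    (μ : Measure ℝ) [IsProbabilityMeasure μ]
    (hprod : ∀ g : ℝ → ℝ≥0∞, Measurable g →
      ∫⁻ ω, ∏ i, g (Y i ω) ∂P = (∫⁻ y, g y ∂μ) ^ n)
    (hL2 : Integrable (fun y => y ^ 2) μ)
    (m v : ℝ) (hm : m = ∫ y, y ∂μ) (hv : v = ∫ y, (y - m) ^ 2 ∂μ)
    (θ' α L : ℝ) (hα : 0 < α) (hL : 0 < L) :
    P {ω | α * (v + (m - θ') ^ 2) / 2 + L / (n * α)
        < thetaHat n α θ' (fun i => Y i ω) - m}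
      ≤ ENNReal.ofReal (Real.exp (-L)) := by
  have hn' : (0:ℝ) < n := by exact_mod_cast hn
  set g : ℝ → ℝ≥0∞ := fun y => ENNReal.ofReal (Real.exp (threshT (α * (y - θ')))) with hgdef
  have hg : Measurable g := measurable_g_aux α θ'
  -- integrability of degree ≤ 2 polynomials
  have hint_y : Integrable (fun y : ℝ => y) μ := by
    refine (hL2.add (integrable_const 1)).mono' aestronglyMeasurable_id (ae_of_all _ ?_)
    intro y
    simp only [Pi.add_apply, Real.norm_eq_abs, id]
    nlinarith [sq_nonneg (|y| - 1), sq_abs y, abs_nonneg y]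
  have hiadd : ∀ f h : ℝ → ℝ, Integrable f μ → Integrable h μ →
      Integrable (fun y => f y + h y) μ := fun f h hf hh => hf.add hh
  have hint : ∀ a b c : ℝ, Integrable (fun y : ℝ => a + b * y + c * y ^ 2) μ :=
    fun a b c => hiadd _ _ (hiadd _ _ (integrable_const a) (hint_y.const_mul b))
      (hL2.const_mul c)
  have hs : ∫ y, y ^ 2 ∂μ = v + m ^ 2 := by
    have h0 : ∫ y, ((y - m) ^ 2 - (m ^ 2 + (-(2*m)) * y)) ∂μ
        = ∫ y, y ^ 2 ∂μ := by
      congr 1; funext y; ring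
    have him : Integrable (fun y : ℝ => (y - m) ^ 2) μ :=
      (hint (m^2) (-(2*m)) 1).congr (ae_of_all _ fun y => by ring)
    have hlin : Integrable (fun y : ℝ => m ^ 2 + -(2*m) * y) μ :=
      hiadd _ _ (integrable_const _) (hint_y.const_mul _)
    rw [← h0, integral_sub him hlin,
      integral_add (integrable_const _) (hint_y.const_mul _), integral_const,
      MeasureTheory.integral_const_mul, ← hm, ← hv]
    simp
    ring
  have hval : ∀ a b c : ℝ, ∫ y, (a + b * y + c * y ^ 2) ∂μ = a + b * m + c * (v + m ^ 2) := by
    intro a b c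
    rw [integral_add (hiadd _ _ (integrable_const a) (hint_y.const_mul b)) (hL2.const_mul c),
      integral_add (integrable_const a) (hint_y.const_mul b), integral_const,
      MeasureTheory.integral_const_mul, MeasureTheory.integral_const_mul, hs, ← hm]
    simp
  set q : ℝ := v + (m - θ') ^ 2 with hqdef
  set c : ℝ := α * (m - θ') + α ^ 2 * q / 2 with hcdef
  set b : ℝ → ℝ := fun y =>
    (1 - α*θ' + α^2*θ'^2/2) + (α - α^2*θ') * y + (α^2/2) * y ^ 2 with hbdef
  have hb_int : Integrable b μ := hint _ _ _
  have hb_nonneg : ∀ y, 0 ≤ b y := by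
    intro y
    have h := denomA_pos (α * (y - θ'))
    simp only [hbdef]
    nlinarith
  have hgb : ∀ y, g y ≤ ENNReal.ofReal (b y) := by
    intro y
    refine ENNReal.ofReal_le_ofReal ((exp_threshT_le (α * (y - θ'))).trans_eq ?_)
    simp only [hbdef]; ring
  have hIb : ∫ y, b y ∂μ = 1 + c := by
    simp only [hbdef]
    rw [hval]
    simp only [hcdef, hqdef]
    ring
  have hμg : ∫⁻ y, g y ∂μ ≤ ENNReal.ofReal (Real.exp c) := by
    calc ∫⁻ y, g y ∂μ ≤ ∫⁻ y, ENNReal.ofReal (b y) ∂μ := lintegral_mono hgb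
      _ = ENNReal.ofReal (∫ y, b y ∂μ) :=
          (ofReal_integral_eq_lintegral_ofReal hb_int (ae_of_all _ hb_nonneg)).symm
      _ ≤ ENNReal.ofReal (Real.exp c) := by
          rw [hIb]
          exact ENNReal.ofReal_le_ofReal (by linarith [Real.add_one_le_exp c])
  -- the event inclusion
  have hsub : {ω | α * q / 2 + L / (n * α) < thetaHat n α θ' (fun i => Y i ω) - m}
      ⊆ {ω | ENNReal.ofReal (Real.exp (n * c + L)) ≤ ∏ i, g (Y i ω)} := by
    intro ω hω
    simp only [Set.mem_setOf_eq, thetaHat] at hω ⊢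
    have hprodexp : ∏ i, g (Y i ω)
        = ENNReal.ofReal (Real.exp (∑ i, threshT (α * (Y i ω - θ')))) := by
      rw [Real.exp_sum, ENNReal.ofReal_prod_of_nonneg (fun i _ => (Real.exp_pos _).le)]
    rw [hprodexp]
    apply ENNReal.ofReal_le_ofReal
    apply Real.exp_le_exp.2
    set t := ∑ i, threshT (α * (Y i ω - θ')) with htdef
    have hna : (0:ℝ) < (n:ℝ) * α := by positivity
    have h3 := mul_lt_mul_of_pos_right hω hna
    have e1 : (α * q / 2 + L / (↑n * α)) * (↑n * α) = ↑n * α ^ 2 * q / 2 + L := by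
      field_simp
    have e2 : (θ' + 1 / (↑n * α) * t - m) * (↑n * α) = (θ' - m) * (↑n * α) + t := by
      field_simp; ring
    rw [e1, e2] at h3
    rw [hcdef]
    nlinarith [h3]
  calc P _ ≤ P {ω | ENNReal.ofReal (Real.exp (n * c + L)) ≤ ∏ i, g (Y i ω)} :=
        measure_mono hsub
    _ ≤ (∫⁻ ω, ∏ i, g (Y i ω) ∂P) / ENNReal.ofReal (Real.exp (n * c + L)) := by
        refine meas_ge_le_lintegral_div ?_ ?_ ?_
        · exact (Finset.measurable_prod _ fun i _ => hg.comp (hYmeas i)).aemeasurable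
        · exact (ENNReal.ofReal_pos.2 (Real.exp_pos _)).ne'
        · exact ENNReal.ofReal_ne_top
    _ = (∫⁻ y, g y ∂μ) ^ n / ENNReal.ofReal (Real.exp (n * c + L)) := by
        rw [hprod g hg]
    _ ≤ (ENNReal.ofReal (Real.exp c)) ^ n / ENNReal.ofReal (Real.exp (n * c + L)) := by
        gcongr
    _ = ENNReal.ofReal (Real.exp (n * c)) / ENNReal.ofReal (Real.exp (n * c + L)) := by
        rw [← ENNReal.ofReal_pow (Real.exp_pos _).le, ← Real.exp_nat_mul]
    _ = ENNReal.ofReal (Real.exp (n * c) / Real.exp (n * c + L)) :=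
        (ENNReal.ofReal_div_of_pos (Real.exp_pos _)).symm
    _ = ENNReal.ofReal (Real.exp (-L)) := by
        rw [← Real.exp_sub]
        ring_nf
lemma chernoff_abs {Ω : Type*} [MeasurableSpace Ω] (P : Measure Ω) [IsProbabilityMeasure P]
    (n : ℕ) (hn : 0 < n) (Y : Fin n → Ω → ℝ) (hYmeas : ∀ i, Measurable (Y i))
    (μ : Measure ℝ) [IsProbabilityMeasure μ]
    (hprod : ∀ g : ℝ → ℝ≥0∞, Measurable g →
      ∫⁻ ω, ∏ i, g (Y i ω) ∂P = (∫⁻ y, g y ∂μ) ^ n)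
    (hL2 : Integrable (fun y => y ^ 2) μ)
    (m v : ℝ) (hm : m = ∫ y, y ∂μ) (hv : v = ∫ y, (y - m) ^ 2 ∂μ)
    (θ' L Q : ℝ) (hL : 0 < L) (hQ : 0 < Q) (hq : v + (m - θ') ^ 2 ≤ Q) :
    P {ω | Real.sqrt (2 * Q * L / n)
        < |m - thetaHat n (Real.sqrt (2 * L / (n * Q))) θ' (fun i => Y i ω)|}
      ≤ ENNReal.ofReal (2 * Real.exp (-L)) := by
  set α := Real.sqrt (2 * L / (n * Q)) with hαdef
  have hα : 0 < α := calib_alpha_pos hL hQ hn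
  have hcal : α * Q / 2 + L / (n * α) = Real.sqrt (2 * Q * L / n) := calib_identity hL hQ hn
  set B : ℝ := α * (v + (m - θ') ^ 2) / 2 + L / (n * α) with hBdef
  have hBle : B ≤ Real.sqrt (2 * Q * L / n) := by
    rw [← hcal, hBdef]
    have : α * (v + (m - θ') ^ 2) ≤ α * Q := by
      exact mul_le_mul_of_nonneg_left hq hα.le
    linarith
  -- upper tail
  have hup := chernoff_upper P n hn Y hYmeas μ hprod hL2 m v hm hv θ' α L hα hL
  -- lower tail, by applying the upper tail to -Y
  have hnegmeas : ∀ i, Measurable (fun ω => - Y i ω) := fun i => (hYmeas i).neg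
  have hμ' : IsProbabilityMeasure (μ.map (fun y : ℝ => -y)) :=
    Measure.isProbabilityMeasure_map measurable_neg.aemeasurable
  have hprod' : ∀ g : ℝ → ℝ≥0∞, Measurable g →
      ∫⁻ ω, ∏ i, g (- Y i ω) ∂P = (∫⁻ y, g y ∂(μ.map (fun y : ℝ => -y))) ^ n := by
    intro g hg
    rw [lintegral_map hg measurable_neg]
    exact hprod (fun y => g (-y)) (hg.comp measurable_neg)
  have hL2' : Integrable (fun y => y ^ 2) (μ.map (fun y : ℝ => -y)) := by
    rw [integrable_map_measure (by fun_prop) measurable_neg.aemeasurable]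
    exact hL2.congr (ae_of_all _ fun y => by simp [Function.comp])
  have hm' : -m = ∫ y, y ∂(μ.map (fun y : ℝ => -y)) := by
    rw [integral_map measurable_neg.aemeasurable (Measurable.aestronglyMeasurable (f := fun y : ℝ => y) measurable_id), hm, integral_neg]
  have hv' : v = ∫ y, (y - -m) ^ 2 ∂(μ.map (fun y : ℝ => -y)) := by
    rw [integral_map measurable_neg.aemeasurable
      (Measurable.aestronglyMeasurable (f := fun y : ℝ => (y - -m) ^ 2) (by measurability)), hv]
    congr 1
    funext y
    ring
  have hlow := chernoff_upper P n hn (fun i ω => - Y i ω) hnegmeas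
    (μ.map (fun y : ℝ => -y)) hprod' hL2' (-m) v hm' hv' (-θ') α L hα hL
  have hth : ∀ ω, thetaHat n α (-θ') (fun i => - Y i ω)
      = - thetaHat n α θ' (fun i => Y i ω) := fun ω => thetaHat_neg n α θ' _
  -- combine
  have hsubset : {ω | Real.sqrt (2 * Q * L / n)
        < |m - thetaHat n α θ' (fun i => Y i ω)|}
      ⊆ {ω | α * (v + (m - θ') ^ 2) / 2 + L / (n * α)
            < thetaHat n α θ' (fun i => Y i ω) - m}
        ∪ {ω | α * (v + (-m - -θ') ^ 2) / 2 + L / (n * α)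
            < thetaHat n α (-θ') (fun i => - Y i ω) - -m} := by
    intro ω hω
    simp only [Set.mem_setOf_eq, Set.mem_union, hth ω] at hω ⊢
    have habs : |m - thetaHat n α θ' (fun i => Y i ω)| =
        max (m - thetaHat n α θ' (fun i => Y i ω))
          (thetaHat n α θ' (fun i => Y i ω) - m) := by
      rw [abs_sub_comm]
      rw [abs_eq_max_neg]
      simp [max_comm]
    rw [habs, lt_max_iff] at hω
    rcases hω with h | h
    · right
      have : (-m - -θ') ^ 2 = (m - θ') ^ 2 := by ring
      rw [this]
      have h2 : Real.sqrt (2 * Q * L / n) < (- thetaHat n α θ' fun i => Y i ω) - -m := by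
        linarith
      linarith [hBle]
    · left
      exact lt_of_le_of_lt hBle h
  calc P _ ≤ P ({ω | α * (v + (m - θ') ^ 2) / 2 + L / (n * α)
            < thetaHat n α θ' (fun i => Y i ω) - m}
        ∪ {ω | α * (v + (-m - -θ') ^ 2) / 2 + L / (n * α)
            < thetaHat n α (-θ') (fun i => - Y i ω) - -m}) := measure_mono hsubset
    _ ≤ _ + _ := measure_union_le _ _
    _ ≤ ENNReal.ofReal (Real.exp (-L)) + ENNReal.ofReal (Real.exp (-L)) := by
        exact add_le_add hup hlow
    _ = ENNReal.ofReal (2 * Real.exp (-L)) := by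
        rw [← ENNReal.ofReal_add (Real.exp_pos _).le (Real.exp_pos _).le]
        congr 1
        ring
section SeqLemmas
variable {n : ℕ} {v₀ δ₀ θ₀ : ℝ} {ε x : ℕ → ℝ}

lemma thetaSeq_eq_of_eq (n : ℕ) (v₀ δ₀ θ₀ : ℝ) (ε x : ℕ → ℝ) (Y : Fin n → ℝ) :
    ∀ (k : ℕ) (U U' : ℕ → ℝ), (∀ j, j ≤ k → U j = U' j) →
      thetaSeq n v₀ δ₀ θ₀ ε x Y U k = thetaSeq n v₀ δ₀ θ₀ ε x Y U' k
  | 0, U, U', h => rfl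
  | 1, U, U', h => rfl
  | (i+2), U, U', h => by
      simp only [thetaSeq]
      rw [thetaSeq_eq_of_eq n v₀ δ₀ θ₀ ε x Y (i+1) U U' (fun j hj => h j (by omega)),
        h (i+2) le_rfl]

lemma measurable_thetaSeq (n : ℕ) (v₀ δ₀ θ₀ : ℝ) (ε x : ℕ → ℝ) :
    ∀ k : ℕ, Measurable (fun p : (Fin n → ℝ) × (ℕ → ℝ) =>
      thetaSeq n v₀ δ₀ θ₀ ε x p.1 p.2 k)
  | 0 => measurable_const
  | 1 => by
      simp only [thetaSeq]
      exact (continuous_thetaHat n _).measurable.comp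
        (measurable_const.prodMk measurable_fst)
  | (i+2) => by
      simp only [thetaSeq]
      refine (continuous_thetaHat n _).measurable.comp (Measurable.prodMk ?_ measurable_fst)
      exact (measurable_thetaSeq n v₀ δ₀ θ₀ ε x (i+1)).add
        (measurable_const.mul ((measurable_pi_apply (i+2)).comp measurable_snd))

lemma deltaSeq_pos (hn : 0 < n) (hv₀ : 0 < v₀) :
    ∀ k : ℕ, 1 ≤ k → (0 < ε k) → (ε k < 1) → (2 ≤ k → 0 < x k) →
      0 < deltaSeq n v₀ δ₀ ε x k
  | 0, h, _, _, _ => absurd h (by omega)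
  | 1, _, h0, h1, _ => by
      simp only [deltaSeq]
      apply Real.sqrt_pos.2
      have hlog : 0 < Real.log (ε 1)⁻¹ := Real.log_pos ((one_lt_inv₀ h0).2 h1)
      have hn' : (0:ℝ) < n := by exact_mod_cast hn
      positivity
  | (i+2), _, h0, h1, hx => by
      simp only [deltaSeq]
      apply Real.sqrt_pos.2
      have hlog : 0 < Real.log (ε (i+2))⁻¹ := Real.log_pos ((one_lt_inv₀ h0).2 h1)
      have hxpos : 0 < x (i+2) := hx (by omega)
      have hlog2 : 0 < Real.log (1 + (x (i+2))⁻¹) := Real.log_pos (by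
        have : 0 < (x (i+2))⁻¹ := by positivity
        linarith)
      have hn' : (0:ℝ) < n := by exact_mod_cast hn
      have hquad : (0:ℝ) ≤ (1 + x (i+2)) ^ 2 * (deltaSeq n v₀ δ₀ ε x (i+1)) ^ 2 := by positivity
      have h2 : 0 < v₀ + (1 + x (i+2)) ^ 2 * (deltaSeq n v₀ δ₀ ε x (i+1)) ^ 2 := by linarith
      have h3 : 0 < Real.log (ε (i+2))⁻¹ + Real.log (1 + (x (i+2))⁻¹) := by linarith
      positivity
end SeqLemmas
set_option maxHeartbeats 1000000 in
lemma claimC {Ω : Type*} [MeasurableSpace Ω] (P : Measure Ω) [IsProbabilityMeasure P]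
    (n : ℕ) (hn : 0 < n) (Y : Fin n → Ω → ℝ) (hYmeas : ∀ i, Measurable (Y i))
    (U : ℕ → Ω → ℝ) (hUmeas : ∀ i, Measurable (U i))
    (μ : Measure ℝ) [IsProbabilityMeasure μ]
    (hindep : iIndepFun (Sum.elim Y U) P)
    (hprod : ∀ g : ℝ → ℝ≥0∞, Measurable g →
      ∫⁻ ω, ∏ i, g (Y i ω) ∂P = (∫⁻ y, g y ∂μ) ^ n)
    (hL2 : Integrable (fun y => y ^ 2) μ)
    (m v : ℝ) (hm : m = ∫ y, y ∂μ) (hv : v = ∫ y, (y - m) ^ 2 ∂μ)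
    (v₀ δ₀ θ₀ : ℝ) (ε x : ℕ → ℝ) (hv₀ : 0 < v₀) (hvle : v ≤ v₀)
    (j : ℕ) (hε0 : 0 < ε (j+2)) (hε1 : ε (j+2) < 1) (hxpos : 0 < x (j+2))
    (hdpos : 0 < deltaSeq n v₀ δ₀ ε x (j+1))
    (hUlaw : Measure.map (U (j+2)) P
      = (2 : ℝ≥0∞)⁻¹ • volume.restrict (Set.Ioo (-1 : ℝ) 1)) :
    P ({ω | |m - thetaSeq n v₀ δ₀ θ₀ ε x (fun i => Y i ω) (fun i => U i ω) (j+1)|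
          ≤ deltaSeq n v₀ δ₀ ε x (j+1)}
      ∩ {ω | deltaSeq n v₀ δ₀ ε x (j+2)
          < |m - thetaSeq n v₀ δ₀ θ₀ ε x (fun i => Y i ω) (fun i => U i ω) (j+2)|})
      ≤ ENNReal.ofReal (2 * ε (j+2)) := by
  classical
  have hn' : (0:ℝ) < n := by exact_mod_cast hn
  set d := deltaSeq n v₀ δ₀ ε x (j+1) with hddef
  set xx := x (j+2) with hxxdef
  set L := Real.log (ε (j+2))⁻¹ + Real.log (1 + xx⁻¹) with hLdef
  set Q := v₀ + (1 + xx) ^ 2 * d ^ 2 with hQdef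
  have hLpos : 0 < L := by
    have h1 : 0 < Real.log (ε (j+2))⁻¹ := Real.log_pos ((one_lt_inv₀ hε0).2 hε1)
    have h2 : 0 < Real.log (1 + xx⁻¹) := Real.log_pos (by nlinarith [inv_pos.2 hxpos])
    rw [hLdef]; linarith
  have hQpos : 0 < Q := by
    have h0 : (0:ℝ) ≤ (1 + xx) ^ 2 * d ^ 2 := by positivity
    rw [hQdef]; linarith
  set α := Real.sqrt (2 * L / (n * Q)) with hαdef
  set δ := Real.sqrt (2 * Q * L / n) with hδdef
  have hαeq : alphaSeq n v₀ δ₀ ε x (j+2) = α := by rw [alphaSeq]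
  have hδeq : deltaSeq n v₀ δ₀ ε x (j+2) = δ := by rw [deltaSeq]
  set c := xx * d with hcdef
  have hcpos : 0 < c := mul_pos hxpos hdpos
  set ν := (2 : ℝ≥0∞)⁻¹ • volume.restrict (Set.Ioo (-1 : ℝ) 1) with hνdef
  have hνfin : IsFiniteMeasure ν := by
    constructor
    rw [hνdef, Measure.smul_apply, Measure.restrict_apply MeasurableSet.univ, Set.univ_inter,
      Real.volume_Ioo, smul_eq_mul]
    exact ENNReal.mul_lt_top (by simp) ENNReal.ofReal_lt_top
  set θprev : Ω → ℝ :=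
    fun ω => thetaSeq n v₀ δ₀ θ₀ ε x (fun i => Y i ω) (fun i => U i ω) (j+1) with hθprevdef
  have hθprevmeas : Measurable θprev := (measurable_thetaSeq n v₀ δ₀ θ₀ ε x (j+1)).comp
    ((measurable_pi_lambda _ fun i => hYmeas i).prodMk (measurable_pi_lambda _ fun i => hUmeas i))
  set Φ : Ω → (Fin n → ℝ) × ℝ := fun ω => (fun i => Y i ω, θprev ω) with hΦdef
  have hΦmeas : Measurable Φ := (measurable_pi_lambda _ fun i => hYmeas i).prodMk hθprevmeas
  -- independence of Φ and U (j+2)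
  set S : Finset (Fin n ⊕ ℕ) := (Finset.univ.map ⟨Sum.inl, Sum.inl_injective⟩)
    ∪ ((Finset.range (j+2)).map ⟨Sum.inr, Sum.inr_injective⟩) with hSdef
  have hmem1 : ∀ a : Fin n, Sum.inl a ∈ S := fun a => Finset.mem_union_left _ (by simp)
  have hmem2 : ∀ b : ℕ, b < j+2 → (Sum.inr b : Fin n ⊕ ℕ) ∈ S :=
    fun b hb => Finset.mem_union_right _ (by simp [hb])
  have hdisj : Disjoint S ({Sum.inr (j+2)} : Finset (Fin n ⊕ ℕ)) := by
    rw [Finset.disjoint_singleton_right]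
    simp only [hSdef, Finset.mem_union, Finset.mem_map, Finset.mem_univ, Finset.mem_range,
      Function.Embedding.coeFn_mk, true_and, not_or, not_exists]
    constructor
    · intro a h
      exact absurd h (by simp)
    · rintro b ⟨hb, hba⟩
      obtain rfl := Sum.inr_injective hba
      omega
  have hbase := hindep.indepFun_finset S {Sum.inr (j+2)} hdisj
    (by rintro (a|b); exacts [hYmeas a, hUmeas b])
  set φmap : ((i : S) → ℝ) → (Fin n → ℝ) × ℝ := fun w =>
    (fun a => w ⟨Sum.inl a, hmem1 a⟩,
     thetaSeq n v₀ δ₀ θ₀ ε x (fun a => w ⟨Sum.inl a, hmem1 a⟩)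
       (fun b => if hb : b < j+2 then w ⟨Sum.inr b, hmem2 b hb⟩ else 0) (j+1)) with hφmapdef
  have hφmeas : Measurable φmap := by
    apply Measurable.prodMk
    · exact measurable_pi_lambda _ fun a => measurable_pi_apply _
    · have hA : Measurable (fun w : (i : S) → ℝ => (fun a : Fin n => w ⟨Sum.inl a, hmem1 a⟩ :
          Fin n → ℝ)) := measurable_pi_lambda _ fun a => measurable_pi_apply _
      have hB : Measurable (fun w : (i : S) → ℝ =>
          (fun b => if hb : b < j + 2 then w ⟨Sum.inr b, hmem2 b hb⟩ else 0 : ℕ → ℝ)) := by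
        apply measurable_pi_lambda
        intro b
        by_cases hb : b < j+2
        · simpa [hb] using measurable_pi_apply (⟨Sum.inr b, hmem2 b hb⟩ : {y // y ∈ S})
        · simpa [hb] using measurable_const
      exact (measurable_thetaSeq n v₀ δ₀ θ₀ ε x (j+1)).comp (hA.prodMk hB)
  have hΦeq : Φ = φmap ∘ (fun ω (i : S) => Sum.elim Y U i ω) := by
    funext ω
    apply Prod.ext
    · rfl
    · simp only [hΦdef, hφmapdef, Function.comp_apply, hθprevdef]
      exact thetaSeq_eq_of_eq n v₀ δ₀ θ₀ ε x _ (j+1) _ _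
        (fun b hb => by rw [dif_pos (by omega : b < j+2)]; rfl)
  have hindepΦ : IndepFun Φ (U (j+2)) P := by
    have h2 : U (j+2) = (fun w : (i : ({Sum.inr (j+2)} : Finset (Fin n ⊕ ℕ))) → ℝ =>
        w ⟨Sum.inr (j+2), Finset.mem_singleton_self _⟩)
        ∘ (fun ω (i : ({Sum.inr (j+2)} : Finset (Fin n ⊕ ℕ))) => Sum.elim Y U i ω) := rfl
    rw [hΦeq, h2]
    exact hbase.comp hφmeas (measurable_pi_apply _)
  have hmap : P.map (fun ω => (Φ ω, U (j+2) ω)) = (P.map Φ).prod ν := by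
    rw [← hUlaw]
    exact (indepFun_iff_map_prod_eq_prod_map_map hΦmeas.aemeasurable
      (hUmeas _).aemeasurable).1 hindepΦ
  -- the event as a preimage
  set E : Set (((Fin n → ℝ) × ℝ) × ℝ) :=
    {p | |m - p.1.2| ≤ d ∧ δ < |m - thetaHat n α (p.1.2 + c * p.2) p.1.1|} with hEdef
  have hmeasTH : Measurable (fun p : ((Fin n → ℝ) × ℝ) × ℝ =>
      thetaHat n α (p.1.2 + c * p.2) p.1.1) :=
    (continuous_thetaHat n α).measurable.comp
      (((measurable_fst.snd).add (measurable_const.mul measurable_snd)).prodMk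
        measurable_fst.fst)
  have hEmeas : MeasurableSet E := by
    refine MeasurableSet.inter ?_ ?_
    · exact measurableSet_le (continuous_abs.measurable.comp
        (measurable_const.sub measurable_fst.snd)) measurable_const
    · exact measurableSet_lt measurable_const
        (continuous_abs.measurable.comp (measurable_const.sub hmeasTH))
  have hstep : ∀ ω, thetaSeq n v₀ δ₀ θ₀ ε x (fun i => Y i ω) (fun i => U i ω) (j+2)
      = thetaHat n α (θprev ω + c * U (j+2) ω) (fun i => Y i ω) := by
    intro ω
    rw [thetaSeq, hαeq]
  have hpre : ({ω | |m - thetaSeq n v₀ δ₀ θ₀ ε x (fun i => Y i ω) (fun i => U i ω) (j+1)| ≤ d}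
      ∩ {ω | δ < |m - thetaSeq n v₀ δ₀ θ₀ ε x (fun i => Y i ω) (fun i => U i ω) (j+2)|})
      = (fun ω => (Φ ω, U (j+2) ω)) ⁻¹' E := by
    ext ω
    simp only [Set.mem_inter_iff, Set.mem_setOf_eq, Set.mem_preimage, hEdef, hΦdef, hstep ω,
      hθprevdef]
  rw [hδeq, hpre]
  have hpairmeas : Measurable (fun ω => (Φ ω, U (j+2) ω)) := hΦmeas.prodMk (hUmeas _)
  rw [← Measure.map_apply hpairmeas hEmeas, hmap, Measure.prod_apply hEmeas]
  set ρ := P.map Φ with hρdef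
  have hρprob : IsProbabilityMeasure ρ := Measure.isProbabilityMeasure_map hΦmeas.aemeasurable
  set J := Set.Ioo (m - (1+xx)*d) (m + (1+xx)*d) with hJdef
  set K : Set (((Fin n → ℝ) × ℝ) × ℝ) := {p | δ < |m - thetaHat n α p.2 p.1.1|} with hKdef
  have hKmeas : MeasurableSet K := by
    refine measurableSet_lt measurable_const (continuous_abs.measurable.comp
      (measurable_const.sub ((continuous_thetaHat n α).measurable.comp
        (measurable_snd.prodMk measurable_fst.fst))))
  -- pointwise slice bound
  have hslicemeas : ∀ z : (Fin n → ℝ) × ℝ,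
      MeasurableSet {θ' : ℝ | δ < |m - thetaHat n α θ' z.1|} := by
    intro z
    exact measurableSet_lt measurable_const (continuous_abs.measurable.comp
      (measurable_const.sub ((continuous_thetaHat n α).measurable.comp
        (measurable_id.prodMk measurable_const))))
  have hslice : ∀ z : (Fin n → ℝ) × ℝ, ν (Prod.mk z ⁻¹' E)
      ≤ 2⁻¹ * (ENNReal.ofReal c⁻¹
          * (volume.restrict J) {θ' | δ < |m - thetaHat n α θ' z.1|}) := by
    intro z
    by_cases hz : |m - z.2| ≤ d
    · have hpreE : Prod.mk z ⁻¹' E = {u | δ < |m - thetaHat n α (z.2 + c*u) z.1|} := by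
        ext u; simp [hEdef, hz]
      have hAmeas : MeasurableSet {u : ℝ | δ < |m - thetaHat n α (z.2 + c*u) z.1|} := by
        exact measurableSet_lt measurable_const (continuous_abs.measurable.comp
          (measurable_const.sub ((continuous_thetaHat n α).measurable.comp
            ((measurable_const.add (measurable_const.mul measurable_id)).prodMk
              measurable_const))))
      rw [hpreE, hνdef, Measure.smul_apply, smul_eq_mul]
      apply mul_le_mul_right
      rw [Measure.restrict_apply hAmeas]
      have hsub2 : {u : ℝ | δ < |m - thetaHat n α (z.2 + c*u) z.1|} ∩ Set.Ioo (-1:ℝ) 1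
          ⊆ (fun u => z.2 + c*u) ⁻¹' ({θ' | δ < |m - thetaHat n α θ' z.1|} ∩ J) := by
        rintro u ⟨hu1, hu2⟩
        refine ⟨hu1, ?_⟩
        simp only [hJdef, Set.mem_Ioo] at hu2 ⊢
        obtain ⟨h1, h2⟩ := hu2
        have habs := abs_le.1 hz
        have hb1 : c * (-1) < c * u := by
          exact mul_lt_mul_of_pos_left h1 hcpos
        have hb2 : c * u < c * 1 := mul_lt_mul_of_pos_left h2 hcpos
        constructor
        · rw [hcdef] at hb1; nlinarith [habs.1, habs.2]
        · rw [hcdef] at hb2; nlinarith [habs.1, habs.2]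
      calc volume ({u : ℝ | δ < |m - thetaHat n α (z.2 + c*u) z.1|} ∩ Set.Ioo (-1:ℝ) 1)
          ≤ volume ((fun u => z.2 + c*u) ⁻¹'
            ({θ' | δ < |m - thetaHat n α θ' z.1|} ∩ J)) := measure_mono hsub2
        _ = ENNReal.ofReal |c⁻¹|
            * volume ({θ' | δ < |m - thetaHat n α θ' z.1|} ∩ J) := by
            rw [show (fun u : ℝ => z.2 + c*u) = (fun w => z.2 + w) ∘ (fun u => c * u) from rfl,
              Set.preimage_comp, Real.volume_preimage_mul_left (ne_of_gt hcpos),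
              measure_preimage_add]
        _ = ENNReal.ofReal c⁻¹ * (volume.restrict J) {θ' | δ < |m - thetaHat n α θ' z.1|} := by
            rw [Measure.restrict_apply (hslicemeas z), abs_of_pos (inv_pos.2 hcpos)]
    · have hpreE : Prod.mk z ⁻¹' E = ∅ := by
        ext u; simp [hEdef, hz]
      rw [hpreE]
      simp
  -- Fubini
  have hFmeas : Measurable (K.indicator (fun _ => (1:ℝ≥0∞))) :=
    measurable_const.indicator hKmeas
  have h1 : ∀ z : (Fin n → ℝ) × ℝ, (volume.restrict J) {θ' | δ < |m - thetaHat n α θ' z.1|}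
      = ∫⁻ θ', K.indicator (fun _ => (1:ℝ≥0∞)) (z, θ') ∂(volume.restrict J) := by
    intro z
    rw [show (fun θ' => K.indicator (fun _ => (1:ℝ≥0∞)) (z, θ'))
        = (Prod.mk z ⁻¹' K).indicator (fun _ => (1:ℝ≥0∞)) from rfl,
      lintegral_indicator_const (measurable_prodMk_left hKmeas), one_mul]
    rfl
  have hzmeas : Measurable (fun z : (Fin n → ℝ) × ℝ =>
      (volume.restrict J) {θ' | δ < |m - thetaHat n α θ' z.1|}) := by
    simp only [h1]
    exact Measurable.lintegral_prod_right' hFmeas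
  have hswap : ∫⁻ z, (volume.restrict J) {θ' | δ < |m - thetaHat n α θ' z.1|} ∂ρ
      = ∫⁻ θ' in J, ρ {z : (Fin n → ℝ) × ℝ | δ < |m - thetaHat n α θ' z.1|} ∂volume := by
    calc ∫⁻ z, (volume.restrict J) {θ' | δ < |m - thetaHat n α θ' z.1|} ∂ρ
        = ∫⁻ z, ∫⁻ θ', K.indicator (fun _ => (1:ℝ≥0∞)) (z, θ') ∂(volume.restrict J) ∂ρ :=
          lintegral_congr h1
      _ = ∫⁻ θ', ∫⁻ z, K.indicator (fun _ => (1:ℝ≥0∞)) (z, θ') ∂ρ ∂(volume.restrict J) :=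
          lintegral_lintegral_swap hFmeas.aemeasurable
      _ = ∫⁻ θ' in J, ρ {z : (Fin n → ℝ) × ℝ | δ < |m - thetaHat n α θ' z.1|} ∂volume := by
          apply lintegral_congr
          intro θ'
          rw [show (fun z : (Fin n → ℝ) × ℝ => K.indicator (fun _ => (1:ℝ≥0∞)) (z, θ'))
              = ((fun z : (Fin n → ℝ) × ℝ => (z, θ')) ⁻¹' K).indicator (fun _ => (1:ℝ≥0∞))
              from rfl,
            lintegral_indicator_const (measurable_prodMk_right hKmeas), one_mul]
          rfl
  have hfixed : ∀ θ' ∈ J, ρ {z : (Fin n → ℝ) × ℝ | δ < |m - thetaHat n α θ' z.1|}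
      ≤ ENNReal.ofReal (2 * Real.exp (-L)) := by
    intro θ' hθ'
    have hsetm : MeasurableSet {z : (Fin n → ℝ) × ℝ | δ < |m - thetaHat n α θ' z.1|} :=
      measurableSet_lt measurable_const (continuous_abs.measurable.comp
        (measurable_const.sub ((continuous_thetaHat n α).measurable.comp
          (measurable_const.prodMk measurable_fst))))
    have heq : ρ {z : (Fin n → ℝ) × ℝ | δ < |m - thetaHat n α θ' z.1|}
        = P {ω | δ < |m - thetaHat n α θ' (fun i => Y i ω)|} := by
      rw [hρdef, Measure.map_apply hΦmeas hsetm]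
      rfl
    rw [heq]
    have hq' : v + (m - θ') ^ 2 ≤ Q := by
      simp only [hJdef, Set.mem_Ioo] at hθ'
      have hA : (0:ℝ) < (1 + xx) * d := by positivity
      have hsq : (m - θ') ^ 2 ≤ ((1 + xx) * d) ^ 2 := by
        nlinarith [mul_pos (show (0:ℝ) < (1+xx)*d - (m - θ') by linarith [hθ'.1, hθ'.2])
          (show (0:ℝ) < (1+xx)*d + (m - θ') by linarith [hθ'.1, hθ'.2])]
      rw [hQdef]
      nlinarith [hsq]
    exact chernoff_abs P n hn Y hYmeas μ hprod hL2 m v hm hv θ' L Q hLpos hQpos hq'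
  calc ∫⁻ z, ν (Prod.mk z ⁻¹' E) ∂ρ
      ≤ ∫⁻ z, 2⁻¹ * (ENNReal.ofReal c⁻¹
          * (volume.restrict J) {θ' | δ < |m - thetaHat n α θ' z.1|}) ∂ρ :=
        lintegral_mono hslice
    _ = 2⁻¹ * ENNReal.ofReal c⁻¹
        * ∫⁻ z, (volume.restrict J) {θ' | δ < |m - thetaHat n α θ' z.1|} ∂ρ := by
        simp_rw [← mul_assoc]
        rw [lintegral_const_mul _ hzmeas]
    _ = 2⁻¹ * ENNReal.ofReal c⁻¹
        * ∫⁻ θ' in J, ρ {z : (Fin n → ℝ) × ℝ | δ < |m - thetaHat n α θ' z.1|} ∂volume := by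
        rw [hswap]
    _ ≤ 2⁻¹ * ENNReal.ofReal c⁻¹
        * ∫⁻ _ in J, ENNReal.ofReal (2 * Real.exp (-L)) ∂volume := by
        exact mul_le_mul_right (setLIntegral_mono measurable_const hfixed) _
    _ = 2⁻¹ * ENNReal.ofReal c⁻¹ * (ENNReal.ofReal (2 * Real.exp (-L)) * volume J) := by
        rw [setLIntegral_const]
    _ = ENNReal.ofReal (2 * ε (j+2)) := by
        have hvolJ : volume J = ENNReal.ofReal (2*(1+xx)*d) := by
          rw [hJdef, Real.volume_Ioo]
          congr 1
          ring
        have hexpL : Real.exp (-L) = ε (j+2) * xx / (1+xx) := by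
          rw [show -L = Real.log (ε (j+2)) - Real.log (1+xx⁻¹) by rw [hLdef, Real.log_inv]; ring,
            Real.exp_sub, Real.exp_log hε0, Real.exp_log (by positivity)]
          field_simp
          ring
        have hkey : c⁻¹ * (2 * Real.exp (-L) * (2*(1+xx)*d)) = 4 * ε (j+2) := by
          rw [hexpL, hcdef]
          field_simp
          ring
        rw [hvolJ,
          ← ENNReal.ofReal_mul (by positivity : (0:ℝ) ≤ 2 * Real.exp (-L)),
          mul_assoc,
          ← ENNReal.ofReal_mul (by positivity : (0:ℝ) ≤ c⁻¹),
          hkey,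
          show (4:ℝ) * ε (j+2) = 2*(2*ε (j+2)) by ring,
          ENNReal.ofReal_mul (by norm_num : (0:ℝ) ≤ 2),
          ENNReal.ofReal_ofNat,
          ← mul_assoc, ENNReal.inv_mul_cancel (by norm_num) (by norm_num), one_mul]

set_option maxHeartbeats 1000000 in
/-- Proposition 2.1 (iterated truncated mean estimates): if `v ≤ v₀` and `|m - θ₀| ≤ δ₀`,
and `U₂, …, U_k` are uniform on `(-1,1)` and independent of each other and of the sample,
then with probability at least `1 - 2 ∑_{i=1}^k εᵢ`, `|m - θ̃_k| ≤ δ_k`. -/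
theorem iterated_truncated_mean
    {Ω : Type*} [MeasurableSpace Ω] (P : Measure Ω) [IsProbabilityMeasure P]
    (n : ℕ) (hn : 0 < n) (Y : Fin n → Ω → ℝ) (hYmeas : ∀ i, Measurable (Y i))
    (U : ℕ → Ω → ℝ) (hUmeas : ∀ i, Measurable (U i))
    (μ : Measure ℝ) [IsProbabilityMeasure μ]
    (hindep : iIndepFun (Sum.elim Y U) P)
    (hid : ∀ i, Measure.map (Y i) P = μ)
    (hL2 : Integrable (fun y => y ^ 2) μ)
    (m v : ℝ) (hm : m = ∫ y, y ∂μ) (hv : v = ∫ y, (y - m) ^ 2 ∂μ)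
    (v₀ δ₀ θ₀ : ℝ) (hv₀ : 0 < v₀) (hδ₀ : 0 ≤ δ₀) (hvle : v ≤ v₀) (hθ₀ : |m - θ₀| ≤ δ₀)
    (k : ℕ) (hk : 1 ≤ k)
    (ε : ℕ → ℝ) (hε : ∀ i, 1 ≤ i → i ≤ k → ε i ∈ Set.Ioo (0 : ℝ) 1)
    (x : ℕ → ℝ) (hx : ∀ i, 2 ≤ i → i ≤ k → 0 < x i)
    (hU : ∀ i, 2 ≤ i → i ≤ k →
      Measure.map (U i) P = (2 : ENNReal)⁻¹ • volume.restrict (Set.Ioo (-1 : ℝ) 1)) :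
    ENNReal.ofReal (1 - 2 * ∑ i ∈ Finset.Icc 1 k, ε i) ≤
      P {ω | |m - thetaSeq n v₀ δ₀ θ₀ ε x (fun i => Y i ω) (fun i => U i ω) k| ≤
        deltaSeq n v₀ δ₀ ε x k} := by
  classical
  -- the product property for i.i.d. samples
  have hprod : ∀ g : ℝ → ℝ≥0∞, Measurable g →
      ∫⁻ ω, ∏ i, g (Y i ω) ∂P = (∫⁻ y, g y ∂μ) ^ n := by
    intro g hg
    set gsel : ∀ _ : Fin n ⊕ ℕ, ℝ → ℝ≥0∞ :=
      Sum.elim (fun _ : Fin n => g) (fun _ : ℕ => (fun _ : ℝ => (1:ℝ≥0∞))) with hgsel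
    have hgselm : ∀ j, Measurable (gsel j) := by
      rintro (a|b); exacts [hg, measurable_const]
    have hW := hindep.comp gsel hgselm
    have hWm : ∀ j, Measurable (gsel j ∘ Sum.elim Y U j) := by
      rintro (a|b); exacts [hg.comp (hYmeas a), measurable_const]
    have h := lintegral_indep_prod hW hWm (Finset.univ.map ⟨Sum.inl, Sum.inl_injective⟩)
    have hLfun : (fun ω => ∏ j ∈ Finset.univ.map ⟨Sum.inl, Sum.inl_injective⟩,
        (gsel j ∘ Sum.elim Y U j) ω) = fun ω => ∏ i, g (Y i ω) := by
      funext ω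
      rw [Finset.prod_map]
      rfl
    rw [hLfun] at h
    rw [h, Finset.prod_map]
    have heach : ∀ a : Fin n, ∫⁻ ω, (gsel (Sum.inl a) ∘ Sum.elim Y U (Sum.inl a)) ω ∂P
        = ∫⁻ y, g y ∂μ := by
      intro a
      have : ∫⁻ y, g y ∂μ = ∫⁻ y, g y ∂(Measure.map (Y a) P) := by rw [hid a]
      rw [this, lintegral_map hg (hYmeas a)]
      rfl
    simp only [Function.Embedding.coeFn_mk]
    have hpc : ∏ _a : Fin n, (∫⁻ y, g y ∂μ) = (∫⁻ y, g y ∂μ) ^ n := by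
      rw [Finset.prod_const, Finset.card_univ, Fintype.card_fin]
    rw [← hpc]
    exact Finset.prod_congr rfl fun a _ => heach a
  -- measurability of the estimators
  have hθmeas : ∀ i : ℕ, Measurable (fun ω =>
      thetaSeq n v₀ δ₀ θ₀ ε x (fun a => Y a ω) (fun a => U a ω) i) := fun i =>
    (measurable_thetaSeq n v₀ δ₀ θ₀ ε x i).comp
      ((measurable_pi_lambda _ fun a => hYmeas a).prodMk
        (measurable_pi_lambda _ fun a => hUmeas a))
  set Bad : ℕ → Set Ω := fun i => {ω | deltaSeq n v₀ δ₀ ε x i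
      < |m - thetaSeq n v₀ δ₀ θ₀ ε x (fun a => Y a ω) (fun a => U a ω) i|} with hBad
  have hBmeas : ∀ i, MeasurableSet (Bad i) := fun i =>
    measurableSet_lt measurable_const
      (continuous_abs.measurable.comp (measurable_const.sub (hθmeas i)))
  -- step 1
  have hstep1 : P (Bad 1) ≤ ENNReal.ofReal (2 * ε 1) := by
    have hQpos : 0 < v₀ + δ₀ ^ 2 := by positivity
    have hLpos : 0 < Real.log (ε 1)⁻¹ :=
      Real.log_pos ((one_lt_inv₀ (hε 1 le_rfl hk).1).2 (hε 1 le_rfl hk).2)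
    have hq : v + (m - θ₀) ^ 2 ≤ v₀ + δ₀ ^ 2 := by
      have h2 : (m - θ₀) ^ 2 ≤ δ₀ ^ 2 := by
        nlinarith [abs_nonneg (m - θ₀), sq_abs (m - θ₀), hθ₀]
      linarith
    have hch := chernoff_abs P n hn Y hYmeas μ hprod hL2 m v hm hv θ₀
      (Real.log (ε 1)⁻¹) (v₀ + δ₀ ^ 2) hLpos hQpos hq
    have hee : Real.exp (-Real.log (ε 1)⁻¹) = ε 1 := by
      rw [Real.log_inv, neg_neg, Real.exp_log (hε 1 le_rfl hk).1]
    have hev : Bad 1 = {ω | Real.sqrt (2 * (v₀ + δ₀ ^ 2) * Real.log (ε 1)⁻¹ / n)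
        < |m - thetaHat n (Real.sqrt (2 * Real.log (ε 1)⁻¹ / (n * (v₀ + δ₀ ^ 2)))) θ₀
            (fun i => Y i ω)|} := by
      ext ω
      simp only [hBad, Set.mem_setOf_eq, thetaSeq, deltaSeq, alphaSeq]
    rw [hev]
    refine hch.trans (le_of_eq ?_)
    rw [hee]
  -- induction
  have hmain : ∀ i : ℕ, 1 ≤ i → i ≤ k →
      P (Bad i) ≤ ∑ r ∈ Finset.Icc 1 i, ENNReal.ofReal (2 * ε r) := by
    intro i
    induction i with
    | zero => omega
    | succ i ih =>
      intro h1 hik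
      by_cases hi : i = 0
      · subst hi
        simpa using hstep1
      · obtain ⟨j, rfl⟩ : ∃ j, i = j + 1 := ⟨i - 1, by omega⟩
        have hdpos' : 0 < deltaSeq n v₀ δ₀ ε x (j+1) :=
          deltaSeq_pos hn hv₀ (j+1) (by omega) (hε (j+1) (by omega) (by omega)).1
            (hε (j+1) (by omega) (by omega)).2 (fun h2 => hx (j+1) h2 (by omega))
        have hC := claimC P n hn Y hYmeas U hUmeas μ hindep hprod hL2 m v hm hv
          v₀ δ₀ θ₀ ε x hv₀ hvle j (hε (j+2) (by omega) hik).1 (hε (j+2) (by omega) hik).2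
          (hx (j+2) (by omega) hik) hdpos' (hU (j+2) (by omega) hik)
        have hgc : (Bad (j+1))ᶜ = {ω | |m - thetaSeq n v₀ δ₀ θ₀ ε x (fun a => Y a ω)
            (fun a => U a ω) (j+1)| ≤ deltaSeq n v₀ δ₀ ε x (j+1)} := by
          ext ω
          simp [hBad, not_lt]
        have hsplit : P (Bad (j+2)) ≤ P ((Bad (j+1))ᶜ ∩ Bad (j+2)) + P (Bad (j+1)) := by
          refine le_trans (measure_le_inter_add_diff P (Bad (j+2)) (Bad (j+1))ᶜ)
            (add_le_add (le_of_eq (by rw [Set.inter_comm])) (measure_mono ?_))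
          intro ω hω
          simpa using hω.2
        calc P (Bad (j+2)) ≤ P ((Bad (j+1))ᶜ ∩ Bad (j+2)) + P (Bad (j+1)) := hsplit
          _ ≤ ENNReal.ofReal (2 * ε (j+2))
              + ∑ r ∈ Finset.Icc 1 (j+1), ENNReal.ofReal (2 * ε r) := by
              refine add_le_add ?_ (ih (by omega) (by omega))
              rw [hgc]
              exact hC
          _ = ∑ r ∈ Finset.Icc 1 (j+2), ENNReal.ofReal (2 * ε r) := by
              rw [Finset.sum_Icc_succ_top (by omega : 1 ≤ j+2)]
              rw [add_comm]
  have hfin := hmain k hk le_rfl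
  have hsum : ∑ r ∈ Finset.Icc 1 k, ENNReal.ofReal (2 * ε r)
      = ENNReal.ofReal (2 * ∑ i ∈ Finset.Icc 1 k, ε i) := by
    rw [← ENNReal.ofReal_sum_of_nonneg (fun i hi => mul_nonneg (by norm_num)
      (hε i (Finset.mem_Icc.1 hi).1 (Finset.mem_Icc.1 hi).2).1.le)]
    congr 1
    rw [Finset.mul_sum]
  have hPB : P (Bad k) ≤ ENNReal.ofReal (2 * ∑ i ∈ Finset.Icc 1 k, ε i) :=
    hfin.trans (le_of_eq hsum)
  have hgoal : {ω | |m - thetaSeq n v₀ δ₀ θ₀ ε x (fun i => Y i ω) (fun i => U i ω) k|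
      ≤ deltaSeq n v₀ δ₀ ε x k} = (Bad k)ᶜ := by
    ext ω
    simp [hBad, not_lt]
  rw [hgoal, prob_compl_eq_one_sub (hBmeas k)]
  have hs0 : 0 ≤ 2 * ∑ i ∈ Finset.Icc 1 k, ε i := by
    apply mul_nonneg (by norm_num)
    exact Finset.sum_nonneg fun i hi =>
      (hε i (Finset.mem_Icc.1 hi).1 (Finset.mem_Icc.1 hi).2).1.le
  have h1 : ENNReal.ofReal (1 - 2 * ∑ i ∈ Finset.Icc 1 k, ε i)
      ≤ 1 - ENNReal.ofReal (2 * ∑ i ∈ Finset.Icc 1 k, ε i) := by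
    rw [ENNReal.ofReal_sub _ hs0, ENNReal.ofReal_one]
  exact h1.trans (tsub_le_tsub_left hPB 1)
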